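/- arXiv:2011.11878 — 4 statements merged into one kernel-verified Lean document; each statement's English description precedes it below -/
import Mathlib

section
/- Let μ be a σ-finite measure on a measurable space Ω, and let f, g : Ω → ℝ be measurable probability densities with respect to μ (∫ f dμ = ∫ g dμ = 1) with f(x) > 0 and g(x) > 0 for μ-almost every x. Then for every measurable function D : Ω → ℝ with 0 < D(x) < 1 for μ-almost every x such that the integrals below exist and are finite, ∫ (f(x)·log(D(x)) + g(x)·log(1 − D(x))) dμ(x) ≤ ∫ (f(x)·log(f(x)/(f(x)+g(x))) + g(x)·log(g(x)/(f(x)+g(x)))) dμ(x). -/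
open MeasureTheory

lemma pointwise_disc (a b t : ℝ) (ha : 0 < a) (hb : 0 < b) (ht0 : 0 < t) (ht1 : t < 1) :
    a * Real.log t + b * Real.log (1 - t) ≤
      a * Real.log (a / (a + b)) + b * Real.log (b / (a + b)) := by
  have hab : 0 < a + b := by linarith
  have hc : 0 < a / (a + b) := div_pos ha hab
  have hd : 0 < b / (a + b) := div_pos hb hab
  have h1t : 0 < 1 - t := by linarith
  have e1 : Real.log t - Real.log (a / (a + b)) = Real.log (t / (a / (a + b))) :=
    (Real.log_div (ne_of_gt ht0) (ne_of_gt hc)).symm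
  have e2 : Real.log (1 - t) - Real.log (b / (a + b)) = Real.log ((1 - t) / (b / (a + b))) :=
    (Real.log_div (ne_of_gt h1t) (ne_of_gt hd)).symm
  have b1 : Real.log (t / (a / (a + b))) ≤ t / (a / (a + b)) - 1 :=
    Real.log_le_sub_one_of_pos (div_pos ht0 hc)
  have b2 : Real.log ((1 - t) / (b / (a + b))) ≤ (1 - t) / (b / (a + b)) - 1 :=
    Real.log_le_sub_one_of_pos (div_pos h1t hd)
  have v1 : t / (a / (a + b)) = t * (a + b) / a := by
    field_simp
  have v2 : (1 - t) / (b / (a + b)) = (1 - t) * (a + b) / b := by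
    field_simp
  have key : a * (Real.log t - Real.log (a / (a + b))) +
      b * (Real.log (1 - t) - Real.log (b / (a + b))) ≤ 0 := by
    rw [e1, e2]
    have h1 : a * Real.log (t / (a / (a + b))) ≤ a * (t / (a / (a + b)) - 1) :=
      mul_le_mul_of_nonneg_left b1 ha.le
    have h2 : b * Real.log ((1 - t) / (b / (a + b))) ≤ b * ((1 - t) / (b / (a + b)) - 1) :=
      mul_le_mul_of_nonneg_left b2 hb.le
    have w1 : a * (t / (a / (a + b)) - 1) = t * (a + b) - a := by
      rw [v1]; field_simp
    have w2 : b * ((1 - t) / (b / (a + b)) - 1) = (1 - t) * (a + b) - b := by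
      rw [v2]; field_simp
    nlinarith [h1, h2]
  nlinarith [key]

/-- The integral form of the optimal-discriminator fact: among measurable discriminators
`D` with values a.e. in `(0,1)` (such that the integrals below exist and are finite), the
objective `∫ (f · log D + g · log (1 − D)) dμ` is maximized by `D* = f / (f + g)`. -/
theorem optimal_discriminator_integral {Ω : Type*} [MeasurableSpace Ω]
    (μ : Measure Ω) [SigmaFinite μ]
    (f g : Ω → ℝ) (hf : Measurable f) (hg : Measurable g)
    (hfpos : ∀ᵐ x ∂μ, 0 < f x) (hgpos : ∀ᵐ x ∂μ, 0 < g x)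
    (hf1 : ∫ x, f x ∂μ = 1) (hg1 : ∫ x, g x ∂μ = 1) :
    ∀ D : Ω → ℝ, Measurable D → (∀ᵐ x ∂μ, 0 < D x ∧ D x < 1) →
      Integrable (fun x => f x * Real.log (D x) + g x * Real.log (1 - D x)) μ →
      Integrable (fun x => f x * Real.log (f x / (f x + g x)) +
        g x * Real.log (g x / (f x + g x))) μ →
      ∫ x, (f x * Real.log (D x) + g x * Real.log (1 - D x)) ∂μ ≤
        ∫ x, (f x * Real.log (f x / (f x + g x)) +
          g x * Real.log (g x / (f x + g x))) ∂μ := by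
  intro D hD hD01 hI1 hI2
  refine integral_mono_ae hI1 hI2 ?_
  filter_upwards [hfpos, hgpos, hD01] with x hfx hgx hDx
  exact pointwise_disc (f x) (g x) (D x) hfx hgx hDx.1 hDx.2
end

section
/- Let n be a finite index type, let C be a fixed real n×n matrix, and let S be a real n×n matrix whose determinant is a unit (S is invertible). Then, as β → ∞ along the real numbers, the matrices Σ*(β) = ((1/(1+β)) • (C + β • S⁻¹))⁻¹ converge to S; that is, the function β ↦ ((1/(1+β)) • (C + β • S⁻¹))⁻¹ tends to S in the topology of real n×n matrices as β tends to infinity. -/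
open Filter Matrix

/-- Corollary 1 of the paper: for a fixed matrix `C` and an invertible matrix `S`,
the stationary covariance `Σ*(β) = ((1/(1+β)) • (C + β • S⁻¹))⁻¹` converges to `S`
as the total-correlation weight `β → ∞`. -/
theorem stationary_covariance_limit {n : Type*} [Fintype n] [DecidableEq n]
    (C S : Matrix n n ℝ) (hS : IsUnit S.det) :
    Tendsto (fun β : ℝ => ((1 / (1 + β)) • (C + β • S⁻¹))⁻¹) atTop (nhds S) := by
  have hdet : IsUnit (S⁻¹).det := S.isUnit_nonsing_inv_det hS
  have hcont : ContinuousAt Inv.inv (S⁻¹) :=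
    continuousAt_matrix_inv _ (NormedRing.inverse_continuousAt hdet.unit)
  have h1 : Tendsto (fun β : ℝ => 1 / (1 + β)) atTop (nhds 0) := by
    simpa [one_div, Pi.inv_def] using (tendsto_atTop_add_const_left atTop (1:ℝ) tendsto_id).inv_tendsto_atTop
  have h2 : Tendsto (fun β : ℝ => β / (1 + β)) atTop (nhds 1) := by
    have heq : (fun β : ℝ => β / (1 + β)) =ᶠ[atTop] fun β => 1 - 1 / (1 + β) := by
      filter_upwards [eventually_gt_atTop 0] with β hβ
      have : (1 : ℝ) + β ≠ 0 := by linarith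
      field_simp
      ring
    rw [tendsto_congr' heq]
    simpa using tendsto_const_nhds.sub h1
  have hinner : Tendsto (fun β : ℝ => (1 / (1 + β)) • (C + β • S⁻¹)) atTop (nhds S⁻¹) := by
    have heq : (fun β : ℝ => (1 / (1 + β)) • (C + β • S⁻¹))
        = fun β : ℝ => (1 / (1 + β)) • C + (β / (1 + β)) • S⁻¹ := by
      funext β
      rw [smul_add, smul_smul]
      ring_nf
    rw [heq]
    have := (h1.smul_const C).add (h2.smul_const S⁻¹)
    simpa using this
  have := hcont.tendsto.comp hinner
  simpa [Function.comp_def, Matrix.nonsing_inv_nonsing_inv S hS] using this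
end

section
/- Let n and m be finite index types, let C be a fixed real (n+m)×(n+m) matrix, let B be an invertible real n×n matrix and let E be an invertible real m×m matrix, and let S = fromBlocks B 0 0 E be the block-diagonal matrix with diagonal blocks B and E and zero off-diagonal blocks. Then, as β → ∞ along the real numbers, the matrices Σ*(β) = ((1/(1+β)) • (C + β • S⁻¹))⁻¹ converge to fromBlocks B 0 0 E; in particular the limit matrix has zero off-diagonal blocks. -/
open Filter Matrix

/-- Block-diagonal form of Corollary 1: if the permuted covariance `S = fromBlocks B 0 0 E`
is block diagonal with invertible diagonal blocks `B` and `E`, then the stationary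
covariance `Σ*(β) = ((1/(1+β)) • (C + β • S⁻¹))⁻¹` converges, as `β → ∞`, to the
block-diagonal matrix `fromBlocks B 0 0 E`; in particular the limit has zero
off-diagonal blocks. -/
theorem stationary_covariance_block_diagonal_limit
    {n m : Type*} [Fintype n] [Fintype m] [DecidableEq n] [DecidableEq m]
    (C : Matrix (n ⊕ m) (n ⊕ m) ℝ) (B : Matrix n n ℝ) (E : Matrix m m ℝ)
    (hB : IsUnit B.det) (hE : IsUnit E.det) :
    Tendsto (fun β : ℝ => ((1 / (1 + β)) • (C + β • (fromBlocks B 0 0 E)⁻¹))⁻¹)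
      atTop (nhds (fromBlocks B 0 0 E)) := by
  set S : Matrix (n ⊕ m) (n ⊕ m) ℝ := fromBlocks B 0 0 E with hS
  have hSdet : IsUnit S.det := by
    rw [hS, Matrix.det_fromBlocks_zero₂₁]
    exact hB.mul hE
  have hSinvdet : IsUnit S⁻¹.det := by
    rw [Matrix.det_nonsing_inv, isUnit_ringInverse]
    exact hSdet
  -- continuity of matrix inverse at S⁻¹
  have hcont : ContinuousAt Inv.inv S⁻¹ := by
    apply continuousAt_matrix_inv
    exact NormedRing.inverse_continuousAt hSinvdet.unit
  -- the inner function tends to S⁻¹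
  have h1 : Tendsto (fun β : ℝ => (1 / (1 + β)) • (C + β • S⁻¹)) atTop (nhds S⁻¹) := by
    have heq : ∀ᶠ β : ℝ in atTop,
        (1 / (1 + β)) • (C + β • S⁻¹)
          = (1 / (1 + β)) • C + (β / (1 + β)) • S⁻¹ := by
      filter_upwards [eventually_gt_atTop (0 : ℝ)] with β hβ
      rw [smul_add, smul_smul]
      ring_nf
    rw [tendsto_congr' heq]
    have ha : Tendsto (fun β : ℝ => 1 / (1 + β)) atTop (nhds 0) := by
      simp only [one_div]
      exact Tendsto.comp tendsto_inv_atTop_zero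
        (by simpa using tendsto_atTop_add_const_left atTop 1 tendsto_id)
    have hb : Tendsto (fun β : ℝ => β / (1 + β)) atTop (nhds 1) := by
      have : (fun β : ℝ => β / (1 + β)) =ᶠ[atTop] fun β => 1 - 1 / (1 + β) := by
        filter_upwards [eventually_gt_atTop (0 : ℝ)] with β hβ
        field_simp
        ring
      rw [tendsto_congr' this]
      simpa using (tendsto_const_nhds (x := (1:ℝ))).sub ha
    have := (ha.smul_const C).add (hb.smul_const S⁻¹)
    simpa using this
  have := hcont.tendsto.comp h1
  rw [Matrix.nonsing_inv_nonsing_inv _ hSdet] at this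
  exact this
end

section
/- Let n be a finite index type and let A be a symmetric positive-definite real n×n matrix. Then for every symmetric positive-definite real n×n matrix Σ, trace(A·Σ) − log(det Σ) ≥ card(n) + log(det A), with equality if and only if Σ = A⁻¹. -/
open Matrix

lemma trace_sub_log_det_core {n : Type*} [Fintype n] [DecidableEq n]
    {M : Matrix n n ℝ} (hM : M.PosDef) :
    ((Fintype.card n : ℝ) ≤ M.trace - Real.log M.det) ∧
      (M.trace - Real.log M.det = (Fintype.card n : ℝ) ↔ M = 1) := by
  have hH := hM.isHermitian
  have hpos := hM.eigenvalues_pos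
  have htr : M.trace = ∑ i, hH.eigenvalues i := by
    conv_lhs => rw [hH.spectral_theorem]
    rw [Unitary.conjStarAlgAut_apply, Matrix.trace_mul_comm, ← Matrix.mul_assoc,
      (Matrix.mem_unitaryGroup_iff').mp (hH.eigenvectorUnitary).2, Matrix.one_mul]
    simp [Matrix.trace_diagonal]
  have hdet : M.det = ∏ i, hH.eigenvalues i := by
    simpa using hH.det_eq_prod_eigenvalues
  have hlog : Real.log M.det = ∑ i, Real.log (hH.eigenvalues i) := by
    rw [hdet, Real.log_prod (fun i _ => (hpos i).ne')]
  have key : M.trace - Real.log M.det = ∑ i, (hH.eigenvalues i - Real.log (hH.eigenvalues i)) := by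
    rw [htr, hlog, Finset.sum_sub_distrib]
  have hterm : ∀ i ∈ Finset.univ, (1 : ℝ) ≤ hH.eigenvalues i - Real.log (hH.eigenvalues i) := by
    intro i _
    have := Real.log_le_sub_one_of_pos (hpos i)
    linarith
  have hcard : (Fintype.card n : ℝ) = ∑ _i : n, (1 : ℝ) := by simp
  constructor
  · rw [key, hcard]
    exact Finset.sum_le_sum hterm
  · constructor
    · intro h
      have heq : ∀ i ∈ Finset.univ, (1:ℝ) = hH.eigenvalues i - Real.log (hH.eigenvalues i) := by
        rw [← Finset.sum_eq_sum_iff_of_le hterm]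
        rw [key, hcard] at h
        exact h.symm
      have hev : ∀ i, hH.eigenvalues i = 1 := by
        intro i
        by_contra hne
        have := Real.log_lt_sub_one_of_pos (hpos i) hne
        have := heq i (Finset.mem_univ i)
        linarith
      have hdiag : Matrix.diagonal (RCLike.ofReal ∘ hH.eigenvalues) = (1 : Matrix n n ℝ) := by
        have : (RCLike.ofReal ∘ hH.eigenvalues : n → ℝ) = fun _ => 1 :=
          funext fun i => by simp [hev i]
        rw [this, Matrix.diagonal_one]
      conv_lhs => rw [hH.spectral_theorem]
      rw [hdiag, Unitary.conjStarAlgAut_apply, Matrix.mul_one]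
      exact (Matrix.mem_unitaryGroup_iff).mp (hH.eigenvectorUnitary).2
    · rintro rfl
      simp

/-- Trace–log-determinant minimization (the analytic fact behind Proposition 1): for a
symmetric positive-definite matrix `A`, every symmetric positive-definite matrix `Σ`
satisfies `trace (A Σ) − log det Σ ≥ card n + log det A`, with equality iff `Σ = A⁻¹`. -/
theorem trace_sub_logDet_ge {n : Type*} [Fintype n] [DecidableEq n]
    (A : Matrix n n ℝ) (hA : A.PosDef) :
    ∀ S : Matrix n n ℝ, S.PosDef →
      ((Fintype.card n : ℝ) + Real.log A.det ≤ (A * S).trace - Real.log S.det) ∧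
        ((A * S).trace - Real.log S.det = (Fintype.card n : ℝ) + Real.log A.det ↔
          S = A⁻¹) := by
  intro S hS
  set B := (open scoped MatrixOrder in CFC.sqrt A) with hBdef
  have hBB : B * B = A := by open scoped MatrixOrder in exact CFC.sqrt_mul_sqrt_self A hA.posSemidef.nonneg
  have hBherm : B.IsHermitian := by open scoped MatrixOrder in exact (CFC.sqrt_nonneg A).isSelfAdjoint.isHermitian
  have hBH : Bᴴ = B := hBherm
  have hBt : Bᵀ = B := by simpa using hBH
  have hdetB : B.det * B.det = A.det := by rw [← Matrix.det_mul, hBB]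
  have hdetBne : B.det ≠ 0 := fun h => by
    rw [h, mul_zero] at hdetB; exact hA.det_pos.ne' hdetB.symm
  have hBunit : IsUnit B.det := hdetBne.isUnit
  set M := B * S * B with hMdef
  -- M is positive definite
  have hM : M.PosDef := by
    refine Matrix.PosDef.of_dotProduct_mulVec_pos ?_ ?_
    · have := Matrix.isHermitian_conjTranspose_mul_mul B hS.isHermitian
      rwa [hBH] at this
    · intro x hx
      have hBx : B *ᵥ x ≠ 0 := by
        intro h
        exact hx (by
          have := (Matrix.mulVec_injective_iff_isUnit.mpr
            ((Matrix.isUnit_iff_isUnit_det B).mpr hBunit)) (a₁ := x) (a₂ := 0)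
          simpa [h] using this)
      have h0 := hS.dotProduct_mulVec_pos hBx
      have key : star x ⬝ᵥ M *ᵥ x = star (B *ᵥ x) ⬝ᵥ S *ᵥ (B *ᵥ x) := by
        simp only [hMdef, Matrix.star_mulVec, hBH, Matrix.dotProduct_mulVec,
          Matrix.vecMul_vecMul, Matrix.mulVec_mulVec, Matrix.mul_assoc]
      rwa [key]
  have htrM : M.trace = (A * S).trace := by
    rw [hMdef, Matrix.trace_mul_comm, ← Matrix.mul_assoc, hBB]
  have hdetM : M.det = A.det * S.det := by
    rw [hMdef, Matrix.det_mul, Matrix.det_mul, mul_comm B.det S.det, mul_assoc, hdetB,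
      mul_comm]
  have hlogM : Real.log M.det = Real.log A.det + Real.log S.det := by
    rw [hdetM, Real.log_mul hA.det_pos.ne' hS.det_pos.ne']
  obtain ⟨hge, hiff⟩ := trace_sub_log_det_core hM
  have hrw : M.trace - Real.log M.det
      = (A * S).trace - Real.log S.det - Real.log A.det := by
    rw [htrM, hlogM]; ring
  have hMS : M = 1 ↔ S = A⁻¹ := by
    constructor
    · intro h
      have h1 : B * (S * B) = 1 := by rw [← Matrix.mul_assoc]; exact h
      have h2 : B⁻¹ = S * B := Matrix.inv_eq_right_inv h1
      have h3 : S = B⁻¹ * B⁻¹ := by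
        have h4 : S * B * B⁻¹ = B⁻¹ * B⁻¹ := by rw [← h2]
        rwa [Matrix.mul_nonsing_inv_cancel_right _ _ hBunit] at h4
      rw [h3, ← Matrix.mul_inv_rev, hBB]
    · rintro rfl
      rw [hMdef, ← hBB, Matrix.mul_inv_rev, ← Matrix.mul_assoc B B⁻¹ B⁻¹,
        Matrix.mul_nonsing_inv _ hBunit, Matrix.one_mul, Matrix.nonsing_inv_mul _ hBunit]
  rw [hrw] at hge hiff
  constructor
  · linarith
  · rw [← hMS, ← hiff]
    constructor <;> intro h <;> linarith
end
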